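/- Let P : Fin N → ℂ be a family of collinear points (all P k lie on a common affine line of the plane), let B ∈ ℂ, and let σ(z) = B + u·conj(z − B) with |u| = 1 be any reflection across a line through B. Then there exists a direct isometry g of the plane such that g(P k) = σ(P k) for all k ∈ Fin N; consequently |g(P k) − B| = |P k − B| for all k. -/

import Mathlib

/-- If all measurement points sensed by a single anchor `B` are collinear, then the
configuration reflected about any line through `B` is realised by a direct isometry
(roto-translation), hence is indistinguishable from the original one. -/
theorem collinear_reflection_realised_by_direct_isometry (N : ℕ) (P : Fin N → ℂ)
    (hP : Collinear ℝ (Set.range P)) (B u : ℂ) (hu : ‖u‖ = 1) :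
    ∃ a b : ℂ, ‖a‖ = 1 ∧
      (∀ k : Fin N, a * P k + b = B + u * (starRingEnd ℂ) (P k - B)) ∧
      (∀ k : Fin N, ‖(a * P k + b) - B‖ = ‖P k - B‖) := by
  obtain ⟨p₀, v, hline⟩ := (collinear_iff_exists_forall_eq_smul_vadd (s := Set.range P) (k := ℝ)).mp hP
  have key : ∃ a b : ℂ, ‖a‖ = 1 ∧
      ∀ k : Fin N, a * P k + b = B + u * (starRingEnd ℂ) (P k - B) := by
    by_cases hv : v = 0
    · refine ⟨1, B + u * (starRingEnd ℂ) (p₀ - B) - p₀, by simp, fun k => ?_⟩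
      obtain ⟨t, ht⟩ := hline (P k) ⟨k, rfl⟩
      subst hv
      simp only [smul_zero, zero_vadd] at ht
      rw [ht]; ring
    · refine ⟨u * (starRingEnd ℂ) v / v,
        B + u * (starRingEnd ℂ) (p₀ - B) - (u * (starRingEnd ℂ) v / v) * p₀, ?_, fun k => ?_⟩
      · rw [norm_div, norm_mul, hu, Complex.norm_conj, one_mul, div_self]
        exact norm_ne_zero_iff.mpr hv
      · obtain ⟨t, ht⟩ := hline (P k) ⟨k, rfl⟩
        rw [ht]
        have hsm : (t : ℝ) • v +ᵥ p₀ = (t : ℂ) * v + p₀ := by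
          simp [Complex.real_smul]
        rw [hsm]
        have hconj : (starRingEnd ℂ) ((t : ℂ) * v + p₀ - B)
            = (t : ℂ) * (starRingEnd ℂ) v + (starRingEnd ℂ) (p₀ - B) := by
          simp [map_add, map_sub, map_mul, Complex.conj_ofReal]
          ring
        rw [hconj]
        field_simp
        ring
  obtain ⟨a, b, ha, hab⟩ := key
  refine ⟨a, b, ha, hab, fun k => ?_⟩
  rw [hab k]
  rw [add_sub_cancel_left, norm_mul, hu, one_mul, Complex.norm_conj]
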